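/- For every connected graph G with m ≥ 1 edges, the Ramsey number satisfies r(K_3, G) ≤ 3m; that is, every red/blue coloring of the edges of the complete graph on 3m vertices contains either a red triangle or a blue copy of G. -/

import Mathlib

open SimpleGraph

/-- `G.ContainsCopy H` means the graph `G` contains a subgraph isomorphic to `H`,
i.e. there is an injective graph homomorphism from `H` into `G`. -/
def SimpleGraph.ContainsCopy {α β : Type*} (G : SimpleGraph α) (H : SimpleGraph β) : Prop :=
  ∃ f : H →g G, Function.Injective f

/-- `RamseyProp n H G` : every graph `Γ` on `n` vertices contains a copy of `H`,
or its complement contains a copy of `G`. -/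
def RamseyProp {α β : Type*} (n : ℕ) (H : SimpleGraph α) (G : SimpleGraph β) : Prop :=
  ∀ Γ : SimpleGraph (Fin n), Γ.ContainsCopy H ∨ Γᶜ.ContainsCopy G

/-- The Ramsey number `r(H, G)` : the least positive `n` such that every graph on `n`
vertices contains a copy of `H` or its complement contains a copy of `G`. -/
noncomputable def ramseyNumber {α β : Type*} (H : SimpleGraph α) (G : SimpleGraph β) : ℕ :=
  sInf {n : ℕ | 0 < n ∧ RamseyProp n H G}

open Finset Function


private abbrev del {γ : Type} (H : SimpleGraph γ) (v : γ) : SimpleGraph {a : γ // a ≠ v} :=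
  SimpleGraph.comap Subtype.val H

private lemma reach_del_of_walk {γ : Type} (H : SimpleGraph γ) (v : γ) {x y : γ}
    (w : H.Walk x y) :
    ∀ (hx : x ≠ v) (hy : y ≠ v), (del H v).Reachable ⟨x, hx⟩ ⟨y, hy⟩ ∨ H.Reachable x v := by
  induction w with
  | nil => exact fun hx hy => Or.inl (Reachable.refl _)
  | @cons a b c h p ih =>
    intro hx hy
    by_cases hb : b = v
    · subst hb; exact Or.inr ⟨h.toWalk⟩
    · rcases ih hb hy with r | r
      · exact Or.inl ((show (del H v).Adj ⟨a, hx⟩ ⟨b, hb⟩ from h).reachable.trans r)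
      · exact Or.inr (h.reachable.trans r)

private lemma reach_to_nbr {γ : Type} (H : SimpleGraph γ) {v x t : γ}
    (w : H.Walk x t) : ∀ (_ : t = v) (hx : x ≠ v),
    ∃ u, ∃ hu : u ≠ v, H.Adj u v ∧ (del H v).Reachable ⟨x, hx⟩ ⟨u, hu⟩ := by
  induction w with
  | nil => exact fun ht hx => absurd ht hx
  | @cons a b c h p ih =>
    intro ht hx
    by_cases hb : b = v
    · subst ht; subst hb; exact ⟨a, hx, h, Reachable.refl _⟩
    · obtain ⟨u, hu, hadj, r⟩ := ih ht hb
      exact ⟨u, hu, hadj, ((show (del H v).Adj ⟨a, hx⟩ ⟨b, hb⟩ from h).reachable.trans r)⟩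
section
private abbrev PLACE := 0
end

section
variable {γ : Type} (H : SimpleGraph γ) (v : γ)

private lemma comp_bound [Fintype γ] [DecidableRel H.Adj] :
    Nat.card (del H v).ConnectedComponent + 1 ≤
      H.degree v + Nat.card H.ConnectedComponent := by
  classical
  set H' := del H v with hH'
  letI : Fintype H'.ConnectedComponent := Fintype.ofFinite _
  letI : Fintype H.ConnectedComponent := Fintype.ofFinite _
  rw [Nat.card_eq_fintype_card, Nat.card_eq_fintype_card]
  set P := fun (C : H'.ConnectedComponent) =>
    ∃ u, ∃ hu : u ≠ v, H.Adj u v ∧ H'.Reachable C.out ⟨u, hu⟩ with hP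
  let f : H'.ConnectedComponent → (↥(H.neighborFinset v)) ⊕ H.ConnectedComponent := fun C =>
    if h : P C then
      Sum.inl ⟨h.choose, by
        rw [SimpleGraph.mem_neighborFinset]
        exact h.choose_spec.choose_spec.1.symm⟩
    else Sum.inr (H.connectedComponentMk C.out.val)
  have hinj : Function.Injective f := by
    intro C₁ C₂ hf
    simp only [f] at hf
    by_cases h₁ : P C₁ <;> by_cases h₂ : P C₂
    · rw [dif_pos h₁, dif_pos h₂] at hf
      obtain ⟨hu₁, hadj₁, r₁⟩ := h₁.choose_spec
      obtain ⟨hu₂, hadj₂, r₂⟩ := h₂.choose_spec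
      have hch : h₁.choose = h₂.choose := congrArg Subtype.val (Sum.inl.inj hf)
      have e : (⟨h₂.choose, hu₂⟩ : {a : γ // a ≠ v}) = ⟨h₁.choose, hu₁⟩ := Subtype.ext hch.symm
      rw [e] at r₂
      rw [← C₁.out_eq, ← C₂.out_eq]
      exact ConnectedComponent.sound (r₁.trans r₂.symm)
    · rw [dif_pos h₁, dif_neg h₂] at hf; exact absurd hf Sum.inl_ne_inr
    · rw [dif_neg h₁, dif_pos h₂] at hf; exact absurd hf Sum.inr_ne_inl
    · rw [dif_neg h₁, dif_neg h₂] at hf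
      have : H.connectedComponentMk C₁.out.val = H.connectedComponentMk C₂.out.val :=
        Sum.inr.inj hf
      have hr := ConnectedComponent.exact this
      obtain ⟨w⟩ := hr
      rcases reach_del_of_walk H v w C₁.out.prop C₂.out.prop with r | r
      · rw [← C₁.out_eq, ← C₂.out_eq]
        exact ConnectedComponent.sound r
      · obtain ⟨w'⟩ := r
        obtain ⟨u, hu, hadj, r'⟩ := reach_to_nbr H w' rfl C₁.out.prop
        exact absurd ⟨u, hu, hadj, r'⟩ h₁
  have hnm : Sum.inr (H.connectedComponentMk v) ∉ Set.range f := by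
    rintro ⟨C, hC⟩
    simp only [f] at hC
    by_cases h : P C
    · rw [dif_pos h] at hC; exact Sum.inl_ne_inr hC
    · rw [dif_neg h] at hC
      have : H.connectedComponentMk C.out.val = H.connectedComponentMk v := Sum.inr.inj hC
      obtain ⟨w⟩ := ConnectedComponent.exact this
      obtain ⟨u, hu, hadj, r'⟩ := reach_to_nbr H w rfl C.out.prop
      exact absurd ⟨u, hu, hadj, r'⟩ h
  have := Fintype.card_lt_of_injective_of_notMem f hinj hnm
  rw [Fintype.card_sum, Fintype.card_coe, card_neighborFinset_eq_degree] at this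
  omega
end

private lemma deg_as_sum {γ : Type} [Fintype γ] (H : SimpleGraph γ) [DecidableRel H.Adj] (x : γ) :
    H.degree x = ∑ y, if H.Adj x y then 1 else 0 := by
  rw [← card_neighborFinset_eq_degree, neighborFinset_eq_filter, Finset.card_filter]

private lemma ncard_edge {γ : Type} (H : SimpleGraph γ) [Fintype H.edgeSet] :
    H.edgeSet.ncard = #H.edgeFinset :=
  Set.ncard_eq_toFinset_card' _

private lemma edge_del {γ : Type} [Fintype γ] (H : SimpleGraph γ) [DecidableRel H.Adj] (v : γ) :
    H.edgeSet.ncard = (del H v).edgeSet.ncard + H.degree v := by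
  classical
  rw [ncard_edge, ncard_edge]
  have key : ∀ (x : {a : γ // a ≠ v}),
      H.degree x.val = (del H v).degree x + (if H.Adj x.val v then 1 else 0) := by
    intro x
    rw [deg_as_sum, deg_as_sum]
    rw [← Finset.sum_erase_add _ _ (Finset.mem_univ v)]
    congr 1
    rw [Finset.sum_subtype (Finset.univ.erase v)
      (fun y => by simp [eq_comm] : ∀ y, y ∈ Finset.univ.erase v ↔ y ≠ v)
      (fun y => if H.Adj x.val y then 1 else 0)]
    apply Finset.sum_congr rfl
    intro y _
    by_cases hxy : H.Adj x.val y.val <;> simp [hxy, del, comap_adj]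
  have hsplit : ∑ x : γ, H.degree x
      = (∑ x : {a : γ // a ≠ v}, H.degree x.val) + H.degree v := by
    rw [← Finset.sum_erase_add _ _ (Finset.mem_univ v)]
    congr 1
    exact Finset.sum_subtype _ (fun y => by simp [eq_comm]) _
  have hcnt : (∑ x : {a : γ // a ≠ v}, (if H.Adj x.val v then 1 else 0)) = H.degree v := by
    rw [← Finset.sum_subtype (Finset.univ.erase v)
      (fun y => by simp [eq_comm] : ∀ y, y ∈ Finset.univ.erase v ↔ y ≠ v)
      (fun y => if H.Adj y v then 1 else 0)]
    have h0 : (if H.Adj v v then 1 else 0) = 0 := by simp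
    have := Finset.sum_erase_add Finset.univ (fun y => if H.Adj y v then 1 else 0)
      (Finset.mem_univ v)
    beta_reduce at this
    rw [h0, Nat.add_zero] at this
    rw [this, deg_as_sum]
    apply Finset.sum_congr rfl
    intro y _
    by_cases h : H.Adj v y <;> simp [h, H.adj_comm y v]
  have hsum : ∑ x : {a : γ // a ≠ v}, H.degree x.val
      = (∑ x : {a : γ // a ≠ v}, (del H v).degree x) + H.degree v := by
    rw [← hcnt, ← Finset.sum_add_distrib]
    exact Finset.sum_congr rfl fun x _ => key x
  have e1 := SimpleGraph.sum_degrees_eq_twice_card_edges H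
  have e2 := SimpleGraph.sum_degrees_eq_twice_card_edges (del H v)
  omega

private lemma comp_le_edge {γ : Type} [Fintype γ] (H : SimpleGraph γ) [DecidableRel H.Adj]
    (hdeg : ∀ x : γ, 0 < H.degree x) :
    Nat.card H.ConnectedComponent ≤ H.edgeSet.ncard := by
  classical
  rw [ncard_edge]
  have hex : ∀ x : γ, ∃ y, H.Adj x y := fun x => (H.degree_pos_iff_exists_adj x).mp (hdeg x)
  let g : γ → γ := fun x => (hex x).choose
  have hg : ∀ x, H.Adj x (g x) := fun x => (hex x).choose_spec
  let f : H.ConnectedComponent → ↥H.edgeFinset := fun C =>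
    ⟨s(C.out, g C.out), by rw [mem_edgeFinset]; exact hg C.out⟩
  have hinj : Function.Injective f := by
    intro C₁ C₂ hf
    have h : s(C₁.out, g C₁.out) = s(C₂.out, g C₂.out) := congrArg Subtype.val hf
    rw [Sym2.eq_iff] at h
    have hr : H.Reachable C₁.out C₂.out := by
      rcases h with ⟨h1, _⟩ | ⟨h1, h2⟩
      · exact h1 ▸ Reachable.refl _
      · exact ((h2 ▸ hg C₁.out : H.Adj C₁.out C₂.out)).reachable
    rw [← C₁.out_eq, ← C₂.out_eq]
    exact ConnectedComponent.sound hr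
  calc Nat.card H.ConnectedComponent ≤ Nat.card ↥H.edgeFinset :=
        Nat.card_le_card_of_injective f hinj
    _ = #H.edgeFinset := by rw [Nat.card_eq_fintype_card, Fintype.card_coe]

private lemma card_subtype_ne {γ : Type} [Fintype γ] [DecidableEq γ] (v : γ) :
    Fintype.card {a : γ // a ≠ v} = Fintype.card γ - 1 := by
  have h1 : Fintype.card {a : γ // a = v} = 1 := Fintype.card_subtype_eq v
  have h2 := Fintype.card_subtype_compl (fun a : γ => a = v)
  rw [h1] at h2
  convert h2 using 2

private lemma vertex_le : ∀ (n : ℕ) (γ : Type) [Fintype γ] (H : SimpleGraph γ)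
    [DecidableRel H.Adj], Fintype.card γ = n →
    Fintype.card γ ≤ H.edgeSet.ncard + Nat.card H.ConnectedComponent := by
  intro n
  induction n using Nat.strong_induction_on with
  | _ n IH =>
    intro γ _ H _ hn
    classical
    rcases Nat.eq_zero_or_pos n with h0 | hpos
    · omega
    · have hne : Nonempty γ := by
        rw [← Fintype.card_pos_iff, hn]; exact hpos
      obtain ⟨v⟩ := hne
      haveI : DecidableRel (del H v).Adj := fun a b => ‹DecidableRel H.Adj› a.1 b.1
      have hc' : Fintype.card {a : γ // a ≠ v} = n - 1 := by rw [card_subtype_ne, hn]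
      have IH' := IH (n-1) (by omega) {a : γ // a ≠ v} (del H v) hc'
      have he := edge_del H v
      have hcb := comp_bound H v
      omega

private lemma conn_card_one {γ : Type} (H : SimpleGraph γ) (h : H.Connected) :
    Nat.card H.ConnectedComponent = 1 := by
  haveI : Nonempty H.ConnectedComponent := ⟨H.connectedComponentMk h.nonempty.some⟩
  haveI : Subsingleton H.ConnectedComponent :=
    ⟨ConnectedComponent.ind₂ fun u w => ConnectedComponent.sound (h.preconnected u w)⟩
  exact Nat.card_unique

private lemma main_embed : ∀ (n : ℕ) (γ : Type) [Fintype γ] (H : SimpleGraph γ)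
    [DecidableRel H.Adj], Fintype.card γ = n →
    ∀ (V : Type) [Fintype V] [DecidableEq V] (Γ : SimpleGraph V) [DecidableRel Γ.Adj],
    (∀ x y z : V, Γ.Adj x y → Γ.Adj x z → Γ.Adj y z → False) →
    ∀ S : Finset V,
      3 * H.edgeSet.ncard + Nat.card H.ConnectedComponent ≤ #S + 1 →
      Fintype.card γ ≤ #S →
      ∃ f : γ → V, Function.Injective f ∧ (∀ x, f x ∈ S) ∧
        ∀ a b : γ, H.Adj a b → ¬Γ.Adj (f a) (f b) ∧ f a ≠ f b := by
  intro n
  induction n using Nat.strong_induction_on with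
  | _ n IH =>
  intro γ _ H _ hn V _ _ Γ _ htf S h1 h2
  classical
  rcases isEmpty_or_nonempty γ with hemp | hne
  · exact ⟨fun x => isEmptyElim x, fun x => isEmptyElim x, fun x => isEmptyElim x,
      fun a => isEmptyElim a⟩
  by_cases hclq : ∃ x ∈ S, Fintype.card γ ≤ #(Γ.neighborFinset x ∩ S)
  · obtain ⟨x, hxS, hcard⟩ := hclq
    obtain ⟨ι, hι⟩ := Function.Embedding.exists_of_card_le_finset hcard
    have hadjx : ∀ a : γ, Γ.Adj x (ι a) ∧ ι a ∈ S := by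
      intro a
      have h := hι ⟨a, rfl⟩
      rw [Finset.mem_coe, Finset.mem_inter, mem_neighborFinset] at h
      exact h
    refine ⟨ι, ι.injective, fun a => (hadjx a).2, ?_⟩
    intro a b hab
    exact ⟨fun hadj => htf x (ι a) (ι b) (hadjx a).1 (hadjx b).1 hadj,
      ι.injective.ne hab.ne⟩
  · push_neg at hclq
    have hn1 : 1 ≤ n := by rw [← hn]; exact Fintype.card_pos
    obtain ⟨k, rfl⟩ : ∃ k, n = k + 1 := ⟨n - 1, by omega⟩
    obtain ⟨v, -, hv⟩ := Finset.exists_min_image Finset.univ (fun x => H.degree x)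
      ⟨hne.some, Finset.mem_univ _⟩
    set d := H.degree v with hd
    have hvmin : ∀ x : γ, d ≤ H.degree x := fun x => hv x (Finset.mem_univ x)
    haveI : DecidableRel (del H v).Adj := fun a b => ‹DecidableRel H.Adj› a.1 b.1
    have hcard' : Fintype.card {a : γ // a ≠ v} = k := by
      rw [card_subtype_ne, hn]
      omega
    have he := edge_del H v
    have hcb := comp_bound H v
    haveI : Nonempty H.ConnectedComponent := ⟨H.connectedComponentMk v⟩
    have hc1 : 1 ≤ Nat.card H.ConnectedComponent := Nat.card_pos
    have hvle := vertex_le (k+1) γ H hn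
    rw [hn] at hvle
    obtain ⟨f', hinj', hmem', hbl'⟩ := IH k (by omega) {a : γ // a ≠ v} (del H v) hcard'
      V Γ htf S (by omega) (by rw [hcard']; omega)
    -- the bad set
    let Bad : Finset V := (Finset.univ.image f') ∪
      (H.neighborFinset v).attach.biUnion
        (fun u => Γ.neighborFinset (f' ⟨u.1, ((SimpleGraph.mem_neighborFinset _ _ _).mp u.2).ne'⟩) ∩ S)
    have hBadImg : #(Finset.univ.image f') ≤ k := by
      calc #(Finset.univ.image f') ≤ #(Finset.univ : Finset {a : γ // a ≠ v}) :=
            Finset.card_image_le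
        _ = k := by rw [Finset.card_univ, hcard']
    have hBad : #Bad ≤ k + d * k := by
      refine le_trans (Finset.card_union_le _ _) (Nat.add_le_add hBadImg ?_)
      refine le_trans (Finset.card_biUnion_le) ?_
      refine le_trans (Finset.sum_le_card_nsmul _ _ k ?_) ?_
      · intro u _
        have hlt := hclq _ (hmem' ⟨u.1, ((SimpleGraph.mem_neighborFinset _ _ _).mp u.2).ne'⟩)
        rw [hn] at hlt
        omega
      · rw [Finset.card_attach, card_neighborFinset_eq_degree, smul_eq_mul, ← hd]
    have hSlt : #Bad + 1 ≤ #S := by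
      rcases Nat.lt_or_ge d 3 with hd3 | hd3
      · have hdn : d * (k+1) ≤ 2 * H.edgeSet.ncard := by
          rw [ncard_edge, ← SimpleGraph.sum_degrees_eq_twice_card_edges H, mul_comm]
          have h := Finset.card_nsmul_le_sum Finset.univ (fun x => H.degree x) d
            (fun x _ => hvmin x)
          rwa [Finset.card_univ, hn, smul_eq_mul] at h
        interval_cases d
        · omega
        · have hce : Nat.card H.ConnectedComponent ≤ H.edgeSet.ncard :=
            comp_le_edge H (fun x => hvmin x)
          omega
        · omega
      · have hdn : d * k + d ≤ 2 * H.edgeSet.ncard := by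
          have h : d * (k+1) ≤ 2 * H.edgeSet.ncard := by
            rw [ncard_edge, ← SimpleGraph.sum_degrees_eq_twice_card_edges H, mul_comm]
            have h := Finset.card_nsmul_le_sum Finset.univ (fun x => H.degree x) d
              (fun x _ => hvmin x)
            rwa [Finset.card_univ, hn, smul_eq_mul] at h
          calc d * k + d = d * (k+1) := by ring
            _ ≤ _ := h
        have h3k : 3 * k ≤ d * k := Nat.mul_le_mul_right k hd3
        generalize hq : d * k = p at hdn h3k hBad
        omega
    obtain ⟨w, hwS, hwB⟩ : ∃ w ∈ S, w ∉ Bad := by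
      by_contra hcon
      push_neg at hcon
      have hsub : S ⊆ Bad := fun y hy => hcon y hy
      have := Finset.card_le_card hsub
      omega
    have hwImg : ∀ x : {a : γ // a ≠ v}, f' x ≠ w := by
      intro x hx
      exact hwB (Finset.mem_union_left _ (Finset.mem_image.mpr ⟨x, Finset.mem_univ _, hx⟩))
    have hwNbr : ∀ (u : γ) (hu : H.Adj v u), ¬ Γ.Adj (f' ⟨u, hu.ne'⟩) w := by
      intro u hu hadj
      refine hwB (Finset.mem_union_right _ ?_)
      refine Finset.mem_biUnion.mpr ⟨⟨u, (SimpleGraph.mem_neighborFinset _ _ _).mpr hu⟩,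
        Finset.mem_attach _ _, ?_⟩
      rw [Finset.mem_inter]
      exact ⟨(SimpleGraph.mem_neighborFinset _ _ _).mpr hadj, hwS⟩
    set F : γ → V := fun x => if hx : x = v then w else f' ⟨x, hx⟩ with hF
    have hFv : F v = w := by simp [hF]
    have hFx : ∀ (x : γ) (hx : x ≠ v), F x = f' ⟨x, hx⟩ := by
      intro x hx
      simp [hF, hx]
    refine ⟨F, ?_, ?_, ?_⟩
    · intro a b hab
      by_cases ha : a = v <;> by_cases hb : b = v
      · rw [ha, hb]
      · rw [ha, hFv, hFx b hb] at hab
        exact absurd hab.symm (hwImg ⟨b, hb⟩)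
      · rw [hb, hFv, hFx a ha] at hab
        exact absurd hab (hwImg ⟨a, ha⟩)
      · rw [hFx a ha, hFx b hb] at hab
        have h := hinj' hab
        rw [Subtype.mk.injEq] at h
        exact h
    · intro y
      by_cases hy : y = v
      · rw [hy, hFv]; exact hwS
      · rw [hFx y hy]; exact hmem' _
    · intro a b hab
      by_cases ha : a = v <;> by_cases hb : b = v
      · exact absurd (ha.trans hb.symm) hab.ne
      · subst ha
        rw [hFv, hFx b hb]
        refine ⟨fun h => hwNbr b hab h.symm, fun h => (hwImg ⟨b, hb⟩) h.symm⟩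
      · subst hb
        rw [hFv, hFx a ha]
        exact ⟨fun h => hwNbr a hab.symm h, hwImg ⟨a, ha⟩⟩
      · rw [hFx a ha, hFx b hb]
        exact hbl' ⟨a, ha⟩ ⟨b, hb⟩ hab

theorem stmt_5 {β : Type} [Fintype β] (G : SimpleGraph β) (m : ℕ)
    (hm : G.edgeSet.ncard = m) (hm1 : 1 ≤ m) (hG : G.Connected) :
    ramseyNumber (⊤ : SimpleGraph (Fin 3)) G ≤ 3 * m ∧
    RamseyProp (3 * m) (⊤ : SimpleGraph (Fin 3)) G := by
  have hprop : RamseyProp (3 * m) (⊤ : SimpleGraph (Fin 3)) G := by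
    intro Γ
    classical
    by_cases hex : ∃ x y z : Fin (3*m), Γ.Adj x y ∧ Γ.Adj x z ∧ Γ.Adj y z
    · left
      obtain ⟨x, y, z, hxy, hxz, hyz⟩ := hex
      have h1 := hxy.symm
      have h2 := hxz.symm
      have h3 := hyz.symm
      have n1 : x ≠ y := hxy.ne
      have n2 : x ≠ z := hxz.ne
      have n3 : y ≠ z := hyz.ne
      have n1' : y ≠ x := n1.symm
      have n2' : z ≠ x := n2.symm
      have n3' : z ≠ y := n3.symm
      refine ⟨⟨![x, y, z], ?_⟩, ?_⟩
      · intro a b hab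
        rw [top_adj] at hab
        fin_cases a <;> fin_cases b <;>
          simp_all [Matrix.cons_val_zero, Matrix.cons_val_one, Matrix.head_cons]
      · intro a b hab
        replace hab : ![x, y, z] a = ![x, y, z] b := hab
        fin_cases a <;> fin_cases b <;>
          simp_all [Matrix.cons_val_zero, Matrix.cons_val_one, Matrix.head_cons]
    · right
      push_neg at hex
      have htf : ∀ x y z : Fin (3*m), Γ.Adj x y → Γ.Adj x z → Γ.Adj y z → False := by
        intro x y z hxy hxz hyz
        exact hex x y z hxy hxz hyz
      haveI : DecidableRel G.Adj := Classical.decRel _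
      haveI : DecidableRel Γ.Adj := Classical.decRel _
      have hc1 := conn_card_one G hG
      have hvle := vertex_le (Fintype.card β) β G rfl
      obtain ⟨f, hinj, hmem, hbl⟩ := main_embed (Fintype.card β) β G rfl (Fin (3*m)) Γ htf
        Finset.univ (by rw [Finset.card_univ, Fintype.card_fin]; omega)
        (by rw [Finset.card_univ, Fintype.card_fin]; omega)
      refine ⟨⟨f, ?_⟩, hinj⟩
      intro a b hab
      rw [compl_adj]
      exact ⟨(hbl a b hab).2, (hbl a b hab).1⟩
  refine ⟨Nat.sInf_le ⟨by omega, hprop⟩, hprop⟩
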